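/- For a continuous map f : X → X on a compact metric space and every integer n > 0, h_L^+(f^n) = n · h_L^+(f) and h_L^-(f^n) = n · h_L^-(f). -/

import Mathlib

open Set Filter Topology Metric
open scoped ENNReal

/-- `U` is an open cover of `X`: a family of open sets whose union is `X`. -/
def IsOpenCover {X : Type*} [MetricSpace X] (U : Set (Set X)) : Prop :=
  (∀ A ∈ U, IsOpen A) ∧ ⋃₀ U = Set.univ

/-- The Lebesgue number of a cover `U`: the largest `δ` such that every open
ball of radius `δ` is contained in some element of `U`. -/
noncomputable def leb {X : Type*} [MetricSpace X] (U : Set (Set X)) : ℝ≥0∞ :=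
  sSup {δ : ℝ≥0∞ | ∀ x : X, ∃ A ∈ U, EMetric.ball x δ ⊆ A}

/-- The cover `{g⁻¹(A) : A ∈ U}`. -/
def preCov {X : Type*} (g : X → X) (U : Set (Set X)) : Set (Set X) :=
  (fun A => g ⁻¹' A) '' U

/-- The join `U ∨ V = {A ∩ B : A ∈ U, B ∈ V}` of two covers. -/
def covJoin {X : Type*} (U V : Set (Set X)) : Set (Set X) :=
  {S | ∃ A ∈ U, ∃ B ∈ V, S = A ∩ B}

/-- The cover `U_f^n = ⋁_{k=0}^{n-1} f^{-k}(U)`. -/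
def covSeq {X : Type*} (f : X → X) (U : Set (Set X)) (n : ℕ) : Set (Set X) :=
  {S | ∃ g : Fin n → Set X, (∀ k, g k ∈ U) ∧ S = ⋂ k : Fin n, (f^[(k : ℕ)]) ⁻¹' g k}

/-- `δ_n(f,U)`, the Lebesgue number of `U_f^n`. -/
noncomputable def lebN {X : Type*} [MetricSpace X] (f : X → X) (U : Set (Set X)) (n : ℕ) : ℝ≥0∞ :=
  leb (covSeq f U n)

/-- `h_L^+(f,U) = limsup_n -(1/n) log δ_n(f,U)`. -/
noncomputable def hLplus {X : Type*} [MetricSpace X] (f : X → X) (U : Set (Set X)) : EReal :=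
  Filter.limsup (fun n : ℕ => ((-Real.log ((lebN f U n).toReal) / n : ℝ) : EReal)) atTop

/-- `h_L^-(f,U) = liminf_n -(1/n) log δ_n(f,U)`. -/
noncomputable def hLminus {X : Type*} [MetricSpace X] (f : X → X) (U : Set (Set X)) : EReal :=
  Filter.liminf (fun n : ℕ => ((-Real.log ((lebN f U n).toReal) / n : ℝ) : EReal)) atTop

/-- `h_L^+(f)`: supremum over finite open covers. -/
noncomputable def hLplusSup {X : Type*} [MetricSpace X] (f : X → X) : EReal :=
  ⨆ (U : Set (Set X)) (_ : IsOpenCover U ∧ U.Finite), hLplus f U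

/-- `h_L^-(f)`: supremum over finite open covers. -/
noncomputable def hLminusSup {X : Type*} [MetricSpace X] (f : X → X) : EReal :=
  ⨆ (U : Set (Set X)) (_ : IsOpenCover U ∧ U.Finite), hLminus f U

/-- The diameter of a cover: supremum of diameters of its elements. -/
noncomputable def covDiam {X : Type*} [MetricSpace X] (U : Set (Set X)) : ℝ≥0∞ :=
  ⨆ A ∈ U, EMetric.diam A

/-- `U` refines `V`: every element of `U` is contained in some element of `V`. -/
def Refines {X : Type*} (U V : Set (Set X)) : Prop :=
  ∀ A ∈ U, ∃ B ∈ V, A ⊆ B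

/-- `N(γ)`: the minimal number of open `γ`-balls needed to cover `X`. -/
noncomputable def covN (X : Type*) [MetricSpace X] (γ : ℝ≥0∞) : ℕ :=
  sInf {n : ℕ | ∃ s : Finset X, s.card = n ∧ ⋃ x ∈ s, EMetric.ball x γ = Set.univ}

/-- `S(U)`: the smallest cardinality of a subcover of `U`. -/
noncomputable def covS {X : Type*} [MetricSpace X] (U : Set (Set X)) : ℕ :=
  sInf {m : ℕ | ∃ W ⊆ U, ⋃₀ W = Set.univ ∧ W.ncard = m}

/-- `s_n(f,ε)`: maximal cardinality of an `(n,ε)`-separated set. -/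
noncomputable def sep {X : Type*} [MetricSpace X] (f : X → X) (n : ℕ) (ε : ℝ) : ℕ :=
  sSup {m : ℕ | ∃ E : Finset X, E.card = m ∧
    ∀ x ∈ E, ∀ y ∈ E, x ≠ y → ∃ k < n, ε < dist (f^[k] x) (f^[k] y)}

/-- Topological entropy via `(n,ε)`-separated sets. -/
noncomputable def topEnt {X : Type*} [MetricSpace X] (f : X → X) : EReal :=
  ⨆ (ε : ℝ) (_ : 0 < ε),
    Filter.limsup (fun n : ℕ => ((Real.log (sep f n ε) / n : ℝ) : EReal)) atTop

/-- Upper box dimension of `X`. -/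
noncomputable def dimB (X : Type*) [MetricSpace X] : EReal :=
  Filter.limsup
    (fun γ : ℝ => ((Real.log (covN X (ENNReal.ofReal γ)) / -Real.log γ : ℝ) : EReal))
    (nhdsWithin (0:ℝ) (Set.Ioi 0))

section AuxHL

open Filter

/-! ### EReal order isomorphism given by multiplication by a positive real -/

/-- Multiplication on the right by a positive real, as an order isomorphism of `EReal`. -/
noncomputable def ERealMulRight (c : ℝ) (hc : 0 < c) : EReal ≃o EReal where
  toFun x := x * (c : EReal)
  invFun x := x / (c : EReal)
  left_inv x := by
    show x * (c : EReal) / (c : EReal) = x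
    rw [← EReal.mul_div, EReal.div_self (EReal.coe_ne_bot c) (EReal.coe_ne_top c)
      (by exact_mod_cast hc.ne'), mul_one]
  right_inv x := EReal.div_mul_cancel (EReal.coe_ne_bot c) (EReal.coe_ne_top c)
      (by exact_mod_cast hc.ne')
  map_rel_iff' := by
    intro x y
    show x * (c : EReal) ≤ y * (c : EReal) ↔ x ≤ y
    constructor
    · intro h
      have h2 : x * (c:EReal) / (c:EReal) ≤ y * (c:EReal) / (c:EReal) :=
        EReal.div_le_div_right_of_nonneg
          (le_of_lt (by exact_mod_cast hc : (0:EReal) < (c:EReal))) h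
      rwa [← EReal.mul_div, ← EReal.mul_div,
        EReal.div_self (EReal.coe_ne_bot c) (EReal.coe_ne_top c) (by exact_mod_cast hc.ne'),
        mul_one, mul_one] at h2
    · intro h
      exact mul_le_mul_of_nonneg_right h (by exact_mod_cast hc.le)

lemma limsup_mul_coe (u : ℕ → EReal) {c : ℝ} (hc : 0 < c) :
    Filter.limsup (fun i => u i * (c : EReal)) atTop = Filter.limsup u atTop * (c : EReal) :=
  ((ERealMulRight c hc).limsup_apply (u := u)).symm

lemma liminf_mul_coe (u : ℕ → EReal) {c : ℝ} (hc : 0 < c) :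
    Filter.liminf (fun i => u i * (c : EReal)) atTop = Filter.liminf u atTop * (c : EReal) :=
  ((ERealMulRight c hc).liminf_apply (u := u)).symm

/-! ### limsup/liminf along the subsequence `m ↦ n * m` -/

lemma tendsto_nat_mul (n : ℕ) (hn : 0 < n) :
    Tendsto (fun m : ℕ => n * m) atTop atTop :=
  tendsto_atTop_mono (fun m => Nat.le_mul_of_pos_left m hn) tendsto_id

lemma limsup_comp_mul_le (v : ℕ → EReal) (n : ℕ) (hn : 0 < n) :
    Filter.limsup (fun m => v (n * m)) atTop ≤ Filter.limsup v atTop := by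
  have h : Filter.limsup (fun m => v (n * m)) atTop
      = Filter.limsup v (Filter.map (fun m : ℕ => n * m) atTop) := by
    rw [Filter.limsup, Filter.limsup, Filter.map_map]; rfl
  rw [h]
  exact limsup_le_limsup_of_le (tendsto_nat_mul n hn)

lemma le_liminf_comp_mul (v : ℕ → EReal) (n : ℕ) (hn : 0 < n) :
    Filter.liminf v atTop ≤ Filter.liminf (fun m => v (n * m)) atTop := by
  have h : Filter.liminf (fun m => v (n * m)) atTop
      = Filter.liminf v (Filter.map (fun m : ℕ => n * m) atTop) := by
    rw [Filter.liminf, Filter.liminf, Filter.map_map]; rfl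
  rw [h]
  exact liminf_le_liminf_of_le (tendsto_nat_mul n hn)

lemma tendsto_coe_const_div (c : ℝ) :
    Tendsto (fun j : ℕ => ((c / (j:ℝ) : ℝ) : EReal)) atTop (nhds (0:EReal)) := by
  rw [show (0:EReal) = ((0:ℝ) : EReal) from rfl, EReal.tendsto_coe]
  exact tendsto_const_div_atTop_nhds_zero_nat c

/-- If `a` is monotone from index `1` on, then `liminf (a (s m) / s m) ≥ 0` for any
index sequence tending to infinity. -/
lemma liminf_div_nonneg (a : ℕ → ℝ) (hmono : ∀ j k, 1 ≤ j → j ≤ k → a j ≤ a k)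
    (s : ℕ → ℕ) (hs : Tendsto s atTop atTop) :
    (0 : EReal) ≤ Filter.liminf (fun m => ((a (s m) / (s m : ℝ) : ℝ) : EReal)) atTop := by
  have h0 : Tendsto (fun m => ((a 1 / (s m : ℝ) : ℝ) : EReal)) atTop (nhds (0:EReal)) :=
    (tendsto_coe_const_div (a 1)).comp hs
  rw [← h0.liminf_eq]
  have hev : ∀ᶠ m in atTop, ((a 1 / (s m : ℝ) : ℝ) : EReal) ≤ ((a (s m) / (s m : ℝ) : ℝ) : EReal) := by
    filter_upwards [hs.eventually_ge_atTop 1] with m hm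
    have hpos : (0:ℝ) < (s m : ℝ) := by exact_mod_cast hm
    exact EReal.coe_le_coe_iff.2 ((div_le_div_iff_of_pos_right hpos).2 (hmono 1 (s m) le_rfl hm))
  exact liminf_le_liminf hev

lemma limsup_div_nonneg (a : ℕ → ℝ) (hmono : ∀ j k, 1 ≤ j → j ≤ k → a j ≤ a k)
    (s : ℕ → ℕ) (hs : Tendsto s atTop atTop) :
    (0 : EReal) ≤ Filter.limsup (fun m => ((a (s m) / (s m : ℝ) : ℝ) : EReal)) atTop :=
  le_trans (liminf_div_nonneg a hmono s hs) liminf_le_limsup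

/-- Hard direction for the limsup. -/
lemma limsup_le_limsup_subseq (a : ℕ → ℝ) (n : ℕ) (hn : 0 < n)
    (hmono : ∀ j k, 1 ≤ j → j ≤ k → a j ≤ a k) :
    Filter.limsup (fun j : ℕ => ((a j / (j:ℝ) : ℝ) : EReal)) atTop
      ≤ Filter.limsup (fun m : ℕ => ((a (n*m) / ((n*m : ℕ):ℝ) : ℝ) : EReal)) atTop := by
  set L := Filter.limsup (fun m : ℕ => ((a (n*m) / ((n*m : ℕ):ℝ) : ℝ) : EReal)) atTop with hL
  have hL0 : (0:EReal) ≤ L := limsup_div_nonneg a hmono _ (tendsto_nat_mul n hn)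
  refine le_of_forall_gt_imp_ge_of_dense fun d hd => ?_
  obtain ⟨r2, hr2a, hr2b⟩ := EReal.exists_between_coe_real hd
  obtain ⟨r1, hr1a, hr1b⟩ := EReal.exists_between_coe_real hr2a
  have hr1pos : (0:ℝ) < r1 := by exact_mod_cast lt_of_le_of_lt hL0 hr1a
  have hr12 : r1 < r2 := by exact_mod_cast hr1b
  have hev : ∀ᶠ m in atTop,
      ((a (n*m) / ((n*m : ℕ):ℝ) : ℝ) : EReal) < ((r1:ℝ) : EReal) :=
    eventually_lt_of_limsup_lt hr1a
  obtain ⟨m₁, hm₁⟩ := eventually_atTop.1 hev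
  obtain ⟨m₂, hm₂⟩ := exists_nat_ge (r1 / (r2 - r1))
  set m₀ := max (max m₁ 1) m₂ with hm₀
  refine le_trans (limsup_le_of_le (by isBoundedDefault) ?_) hr2b.le
  rw [eventually_atTop]
  refine ⟨n * (m₀ + 1), fun j hj => ?_⟩
  set m := j / n with hmdef
  have hm0m : m₀ ≤ m := by
    rw [hmdef, Nat.le_div_iff_mul_le hn]
    calc m₀ * n ≤ n * (m₀ + 1) := by
          rw [mul_comm]; exact Nat.mul_le_mul_left n (Nat.le_succ m₀)
      _ ≤ j := hj
  have hm1 : 1 ≤ m := le_trans (le_trans (le_max_right m₁ 1) (le_max_left _ m₂)) hm0m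
  have hnmj : n * m ≤ j := by
    rw [hmdef, mul_comm]; exact Nat.div_mul_le_self j n
  have hjlt : j < n * (m + 1) := by
    have h := (Nat.div_lt_iff_lt_mul hn).1 (Nat.lt_succ_self m)
    rwa [mul_comm] at h
  have hj1 : 1 ≤ j := le_trans (Nat.mul_pos hn (Nat.succ_pos m₀)) hj
  have hbound := hm₁ (m + 1) (by omega)
  rw [EReal.coe_lt_coe_iff] at hbound
  apply EReal.coe_le_coe_iff.2
  -- now a real computation
  have hJpos : (0:ℝ) < (j:ℝ) := by exact_mod_cast hj1
  have hNpos : (0:ℝ) < (n:ℝ) := by exact_mod_cast hn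
  have hMpos : (0:ℝ) < (m:ℝ) := by exact_mod_cast hm1
  have hcast : ((n * (m+1) : ℕ) : ℝ) = (n:ℝ) * ((m:ℝ) + 1) := by push_cast; ring
  rw [hcast] at hbound
  have hNMpos : (0:ℝ) < (n:ℝ) * ((m:ℝ) + 1) := by nlinarith
  have htop : a (n * (m+1)) < r1 * ((n:ℝ) * ((m:ℝ) + 1)) := by
    rwa [div_lt_iff₀ hNMpos] at hbound
  have haj : a j ≤ a (n * (m+1)) := hmono j (n * (m+1)) hj1 hjlt.le
  have hm2R : r1 / (r2 - r1) ≤ (m:ℝ) := by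
    calc r1 / (r2 - r1) ≤ (m₂ : ℝ) := hm₂
      _ ≤ (m:ℝ) := by exact_mod_cast le_trans (le_max_right _ m₂) hm0m
  have hmr : r1 ≤ (m:ℝ) * (r2 - r1) := by
    rw [div_le_iff₀ (by linarith : (0:ℝ) < r2 - r1)] at hm2R
    linarith
  have hNMj : (n:ℝ) * (m:ℝ) ≤ (j:ℝ) := by exact_mod_cast hnmj
  rw [div_le_iff₀ hJpos]
  have key : r1 * ((n:ℝ) * ((m:ℝ) + 1)) ≤ r2 * ((n:ℝ) * (m:ℝ)) := by nlinarith
  have key2 : r2 * ((n:ℝ) * (m:ℝ)) ≤ r2 * (j:ℝ) := by nlinarith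
  linarith

/-- Hard direction for the liminf. -/
lemma liminf_subseq_le (a : ℕ → ℝ) (n : ℕ) (hn : 0 < n)
    (hmono : ∀ j k, 1 ≤ j → j ≤ k → a j ≤ a k) :
    Filter.liminf (fun m : ℕ => ((a (n*m) / ((n*m : ℕ):ℝ) : ℝ) : EReal)) atTop
      ≤ Filter.liminf (fun j : ℕ => ((a j / (j:ℝ) : ℝ) : EReal)) atTop := by
  have h0 : (0:EReal) ≤ Filter.liminf (fun j : ℕ => ((a j / (j:ℝ) : ℝ) : EReal)) atTop := by
    have := liminf_div_nonneg a hmono id tendsto_id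
    simpa using this
  refine le_of_forall_lt_imp_le_of_dense fun d hd => ?_
  obtain ⟨r2, hr2a, hr2b⟩ := EReal.exists_between_coe_real hd
  obtain ⟨r1, hr1a, hr1b⟩ := EReal.exists_between_coe_real hr2b
  have hr21 : r2 < r1 := by exact_mod_cast hr1a
  by_cases hr2pos : 0 < r2
  · have hev : ∀ᶠ m in atTop,
        ((r1:ℝ) : EReal) < ((a (n*m) / ((n*m : ℕ):ℝ) : ℝ) : EReal) :=
      eventually_lt_of_lt_liminf hr1b
    obtain ⟨m₁, hm₁⟩ := eventually_atTop.1 hev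
    obtain ⟨m₂, hm₂⟩ := exists_nat_ge (r2 / (r1 - r2))
    set m₀ := max (max m₁ 1) m₂ with hm₀
    refine le_trans hr2a.le (le_liminf_of_le (by isBoundedDefault) ?_)
    rw [eventually_atTop]
    refine ⟨n * m₀, fun j hj => ?_⟩
    set m := j / n with hmdef
    have hm0m : m₀ ≤ m := by
      rw [hmdef, Nat.le_div_iff_mul_le hn]
      calc m₀ * n = n * m₀ := by ring
        _ ≤ j := hj
    have hm1 : 1 ≤ m := le_trans (le_trans (le_max_right m₁ 1) (le_max_left _ m₂)) hm0m
    have hnmj : n * m ≤ j := by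
      rw [hmdef, mul_comm]; exact Nat.div_mul_le_self j n
    have hjlt : j < n * (m + 1) := by
      have h := (Nat.div_lt_iff_lt_mul hn).1 (Nat.lt_succ_self m)
      rwa [mul_comm] at h
    have hj1 : 1 ≤ j := le_trans (Nat.mul_pos hn hm1) hnmj
    have hm1m : m₁ ≤ m := le_trans (le_trans (le_max_left m₁ 1) (le_max_left _ m₂)) hm0m
    have hbound := hm₁ m hm1m
    rw [EReal.coe_lt_coe_iff] at hbound
    apply EReal.coe_le_coe_iff.2
    have hJpos : (0:ℝ) < (j:ℝ) := by exact_mod_cast hj1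
    have hNpos : (0:ℝ) < (n:ℝ) := by exact_mod_cast hn
    have hMpos : (0:ℝ) < (m:ℝ) := by exact_mod_cast hm1
    have hcast : ((n * m : ℕ) : ℝ) = (n:ℝ) * (m:ℝ) := by push_cast; ring
    rw [hcast] at hbound
    have hNMpos : (0:ℝ) < (n:ℝ) * (m:ℝ) := by nlinarith
    have hlow : r1 * ((n:ℝ) * (m:ℝ)) < a (n * m) := by
      rwa [lt_div_iff₀ hNMpos] at hbound
    have haj : a (n * m) ≤ a j := hmono (n * m) j (Nat.mul_pos hn hm1) hnmj
    have hm2R : r2 / (r1 - r2) ≤ (m:ℝ) := by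
      calc r2 / (r1 - r2) ≤ (m₂ : ℝ) := hm₂
        _ ≤ (m:ℝ) := by exact_mod_cast le_trans (le_max_right _ m₂) hm0m
    have hmr : r2 ≤ (m:ℝ) * (r1 - r2) := by
      rw [div_le_iff₀ (by linarith : (0:ℝ) < r1 - r2)] at hm2R
      linarith
    have hjNM : (j:ℝ) ≤ (n:ℝ) * ((m:ℝ) + 1) := by exact_mod_cast hjlt.le
    rw [le_div_iff₀ hJpos]
    have key : r2 * (j:ℝ) ≤ r2 * ((n:ℝ) * ((m:ℝ) + 1)) := by nlinarith
    have key2 : r2 * ((n:ℝ) * ((m:ℝ) + 1)) ≤ r1 * ((n:ℝ) * (m:ℝ)) := by nlinarith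
    linarith
  · push_neg at hr2pos
    have : ((r2:ℝ):EReal) ≤ (0:EReal) := by exact_mod_cast hr2pos
    exact le_trans hr2a.le (le_trans this h0)

/-! ### Covers and Lebesgue numbers -/

variable {X : Type*} [MetricSpace X]

lemma leb_mono {U V : Set (Set X)} (h : Refines U V) : leb U ≤ leb V := by
  apply sSup_le_sSup
  intro δ hδ x
  obtain ⟨A, hA, hball⟩ := hδ x
  obtain ⟨B, hB, hAB⟩ := h A hA
  exact ⟨B, hB, hball.trans hAB⟩

lemma covSeq_refines (f : X → X) (U : Set (Set X)) {j k : ℕ} (h : j ≤ k) :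
    Refines (covSeq f U k) (covSeq f U j) := by
  rintro A ⟨g, hg, rfl⟩
  refine ⟨⋂ i : Fin j, (f^[(i:ℕ)]) ⁻¹' g (Fin.castLE h i), ⟨fun i => g (Fin.castLE h i), fun i => hg _, rfl⟩, ?_⟩
  intro x hx
  simp only [Set.mem_iInter, Set.mem_preimage] at hx ⊢
  intro i
  exact hx (Fin.castLE h i)

lemma lebN_antitone (f : X → X) (U : Set (Set X)) {j k : ℕ} (h : j ≤ k) :
    lebN f U k ≤ lebN f U j :=
  leb_mono (covSeq_refines f U h)

lemma univ_mem_covSeq (f : X → X) {U : Set (Set X)} (hU : univ ∈ U) (m : ℕ) :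
    univ ∈ covSeq f U m := by
  refine ⟨fun _ => univ, fun _ => hU, by simp⟩

lemma leb_eq_top_of_univ_mem {V : Set (Set X)} (hV : univ ∈ V) : leb V = ⊤ :=
  top_unique (le_sSup fun x => ⟨univ, hV, subset_univ _⟩)

lemma leb_eq_top_of_isEmpty [IsEmpty X] (V : Set (Set X)) : leb V = ⊤ :=
  top_unique (le_sSup fun x => isEmptyElim x)

lemma covSeq_isOpenCover {f : X → X} (hf : Continuous f) {U : Set (Set X)}
    (hU : IsOpenCover U) (m : ℕ) : IsOpenCover (covSeq f U m) := by
  constructor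
  · rintro A ⟨g, hg, rfl⟩
    exact isOpen_iInter_of_finite fun i => ((hf.iterate (i:ℕ)).isOpen_preimage _ (hU.1 _ (hg i)))
  · apply subset_antisymm (subset_univ _)
    intro x _
    have hx : ∀ k : ℕ, ∃ A ∈ U, f^[k] x ∈ A := by
      intro k
      have : f^[k] x ∈ ⋃₀ U := by rw [hU.2]; trivial
      simpa [Set.mem_sUnion] using this
    choose g hg hgx using hx
    exact ⟨⋂ i : Fin m, (f^[(i:ℕ)]) ⁻¹' g (i:ℕ), ⟨fun i => g (i:ℕ), fun i => hg _, rfl⟩,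
      by simp only [Set.mem_iInter, Set.mem_preimage]; exact fun i => hgx _⟩

lemma covSeq_finite {f : X → X} {U : Set (Set X)} (hU : U.Finite) (m : ℕ) :
    (covSeq f U m).Finite := by
  have hsub : covSeq f U m ⊆
      (fun g : Fin m → Set X => ⋂ i : Fin m, (f^[(i:ℕ)]) ⁻¹' g i) '' (Set.pi univ fun _ => U) := by
    rintro A ⟨g, hg, rfl⟩
    exact ⟨g, fun i _ => hg i, rfl⟩
  exact ((Set.Finite.pi fun _ => hU).image _).subset hsub

lemma leb_pos_of_isOpenCover [CompactSpace X] {V : Set (Set X)} (hV : IsOpenCover V) :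
    0 < leb V := by
  obtain ⟨δ, hδpos, hδ⟩ := lebesgue_number_lemma_of_metric_sUnion isCompact_univ hV.1
    (by rw [hV.2])
  have hmem : ENNReal.ofReal δ ∈ {γ : ℝ≥0∞ | ∀ x : X, ∃ A ∈ V, EMetric.ball x γ ⊆ A} := by
    intro x
    obtain ⟨A, hA, hball⟩ := hδ x trivial
    exact ⟨A, hA, fun y hy => hball (show dist y x < δ from edist_lt_ofReal.1 hy)⟩
  exact lt_of_lt_of_le (by simp [ENNReal.ofReal_pos, hδpos]) (le_sSup hmem)

lemma lebN_pos [CompactSpace X] {f : X → X} (hf : Continuous f) {U : Set (Set X)}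
    (hU : IsOpenCover U) (m : ℕ) : 0 < lebN f U m :=
  leb_pos_of_isOpenCover (covSeq_isOpenCover hf hU m)

lemma lebN_ne_top [CompactSpace X] [Nonempty X] (f : X → X) {U : Set (Set X)}
    (hU : univ ∉ U) {m : ℕ} (hm : 0 < m) : lebN f U m ≠ ⊤ := by
  have hbound : lebN f U m ≤ EMetric.diam (univ : Set X) := by
    apply sSup_le
    intro γ hγ
    by_contra hlt
    push_neg at hlt
    obtain ⟨x₀⟩ := ‹Nonempty X›
    obtain ⟨A, hA, hball⟩ := hγ x₀
    have huniv : univ ⊆ A := by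
      intro y _
      apply hball
      exact lt_of_le_of_lt
        (EMetric.edist_le_diam_of_mem (Set.mem_univ y) (Set.mem_univ x₀)) hlt
    obtain ⟨g, hg, rfl⟩ := hA
    have h0 : univ ⊆ g ⟨0, hm⟩ := by
      intro y hy
      have h1 := huniv hy
      simp only [Set.mem_iInter, Set.mem_preimage] at h1
      have h2 := h1 ⟨0, hm⟩
      simpa using h2
    have hgu : g ⟨0, hm⟩ = univ := subset_antisymm (subset_univ _) h0
    exact hU (hgu ▸ hg ⟨0, hm⟩)
  have hdiam : EMetric.diam (univ : Set X) ≠ ⊤ :=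
    (isCompact_univ.isBounded).ediam_ne_top
  exact fun h => hdiam (top_unique (h ▸ hbound))

lemma lebN_eq_top_of_univ_mem (f : X → X) {U : Set (Set X)} (hU : univ ∈ U) (m : ℕ) :
    lebN f U m = ⊤ :=
  leb_eq_top_of_univ_mem (univ_mem_covSeq f hU m)

/-- The quantity `-log δ_m(f,U)`. -/
noncomputable def aF (f : X → X) (U : Set (Set X)) (j : ℕ) : ℝ :=
  -Real.log ((lebN f U j).toReal)

lemma aF_mono [CompactSpace X] {f : X → X} (hf : Continuous f) {U : Set (Set X)}
    (hU : IsOpenCover U) (hUfin : U.Finite) :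
    ∀ j k, 1 ≤ j → j ≤ k → aF f U j ≤ aF f U k := by
  intro j k hj hjk
  by_cases hdeg : univ ∈ U
  · rw [aF, aF, lebN_eq_top_of_univ_mem f hdeg, lebN_eq_top_of_univ_mem f hdeg]
  · cases isEmpty_or_nonempty X with
    | inl h =>
      rw [aF, aF, lebN, lebN, leb_eq_top_of_isEmpty, leb_eq_top_of_isEmpty]
    | inr h =>
      have h1 : lebN f U k ≤ lebN f U j := lebN_antitone f U hjk
      have hpk : 0 < lebN f U k := lebN_pos hf hU k
      have htj : lebN f U j ≠ ⊤ := lebN_ne_top f hdeg (lt_of_lt_of_le one_pos hj)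
      have htk : lebN f U k ≠ ⊤ := lebN_ne_top f hdeg (lt_of_lt_of_le one_pos (hj.trans hjk))
      apply neg_le_neg
      exact Real.log_le_log (ENNReal.toReal_pos hpk.ne' htk) (ENNReal.toReal_mono htj h1)

lemma aF_le_subseq [CompactSpace X] {f : X → X} (hf : Continuous f) {V : Set (Set X)}
    (hV : IsOpenCover V) {n m : ℕ} (hn : 0 < n) (hm : 0 < m) :
    aF (f^[n]) V m ≤ aF f V (n * m) := by
  have href : Refines (covSeq f V (n*m)) (covSeq (f^[n]) V m) := by
    rintro A ⟨g, hg, rfl⟩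
    refine ⟨⋂ j : Fin m, ((f^[n])^[(j:ℕ)]) ⁻¹' g ⟨n * (j:ℕ),
        (Nat.mul_lt_mul_left hn).2 j.isLt⟩,
      ⟨fun j => g _, fun j => hg _, rfl⟩, ?_⟩
    intro x hx
    simp only [Set.mem_iInter, Set.mem_preimage] at hx ⊢
    intro j
    have := hx ⟨n * (j:ℕ), (Nat.mul_lt_mul_left hn).2 j.isLt⟩
    simpa [← Function.iterate_mul] using this
  have hle : lebN f V (n*m) ≤ lebN (f^[n]) V m := leb_mono href
  by_cases hdeg : univ ∈ V
  · rw [aF, aF, lebN_eq_top_of_univ_mem _ hdeg, lebN_eq_top_of_univ_mem _ hdeg]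
  · cases isEmpty_or_nonempty X with
    | inl h =>
      rw [aF, aF, lebN, lebN, leb_eq_top_of_isEmpty, leb_eq_top_of_isEmpty]
    | inr h =>
      have hp : 0 < lebN f V (n*m) := lebN_pos hf hV _
      have ht : lebN (f^[n]) V m ≠ ⊤ := lebN_ne_top (f^[n]) hdeg hm
      apply neg_le_neg
      exact Real.log_le_log (ENNReal.toReal_pos hp.ne'
        (fun htop => ht (top_unique (htop ▸ hle))))
        (ENNReal.toReal_mono ht hle)


lemma covSeq_iterate (f : X → X) (U : Set (Set X)) {n : ℕ} (hn : 0 < n) (m : ℕ) :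
    covSeq (f^[n]) (covSeq f U n) m = covSeq f U (n * m) := by
  have hdiv : ∀ i : Fin (n*m), (i:ℕ)/n < m :=
    fun i => (Nat.div_lt_iff_lt_mul hn).2 (Nat.lt_of_lt_of_eq i.isLt (Nat.mul_comm n m))
  have hmod : ∀ i : Fin (n*m), (i:ℕ)%n < n := fun i => Nat.mod_lt _ hn
  have hlt : ∀ (j : Fin m) (k : Fin n), (k:ℕ) + n*(j:ℕ) < n*m := fun j k => by
    calc (k:ℕ) + n*(j:ℕ) < n + n*(j:ℕ) := Nat.add_lt_add_right k.isLt _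
      _ = n*((j:ℕ)+1) := by ring
      _ ≤ n*m := Nat.mul_le_mul_left n j.isLt
  ext S
  constructor
  · rintro ⟨G, hG, rfl⟩
    choose g hg hGeq using hG
    refine ⟨fun i => g ⟨(i:ℕ)/n, hdiv i⟩ ⟨(i:ℕ)%n, hmod i⟩, fun i => hg _ _, ?_⟩
    ext x
    simp only [Set.mem_iInter, Set.mem_preimage, hGeq, ← Function.iterate_mul,
      ← Function.iterate_add_apply]
    constructor
    · intro hx i
      have h1 : f^[(i:ℕ)%n + n*((i:ℕ)/n)] x ∈ g ⟨(i:ℕ)/n, hdiv i⟩ ⟨(i:ℕ)%n, hmod i⟩ :=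
        hx ⟨(i:ℕ)/n, hdiv i⟩ ⟨(i:ℕ)%n, hmod i⟩
      rw [Nat.mod_add_div (i:ℕ) n] at h1
      exact h1
    · intro hx j k
      have h1 : f^[(k:ℕ) + n*(j:ℕ)] x ∈
          g ⟨((k:ℕ) + n*(j:ℕ))/n, hdiv ⟨_, hlt j k⟩⟩ ⟨((k:ℕ) + n*(j:ℕ))%n, hmod ⟨_, hlt j k⟩⟩ :=
        hx ⟨(k:ℕ) + n*(j:ℕ), hlt j k⟩
      have e1 : (⟨((k:ℕ) + n*(j:ℕ))/n, hdiv ⟨_, hlt j k⟩⟩ : Fin m) = j := by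
        apply Fin.ext
        show ((k:ℕ) + n*(j:ℕ))/n = (j:ℕ)
        rw [Nat.add_mul_div_left _ _ hn, Nat.div_eq_of_lt k.isLt, zero_add]
      have e2 : (⟨((k:ℕ) + n*(j:ℕ))%n, hmod ⟨_, hlt j k⟩⟩ : Fin n) = k := by
        apply Fin.ext
        show ((k:ℕ) + n*(j:ℕ))%n = (k:ℕ)
        rw [Nat.add_mul_mod_self_left, Nat.mod_eq_of_lt k.isLt]
      rwa [e1, e2] at h1
  · rintro ⟨h, hh, rfl⟩
    refine ⟨fun j => ⋂ k : Fin n, (f^[(k:ℕ)]) ⁻¹' h ⟨(k:ℕ) + n*(j:ℕ), hlt j k⟩,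
      fun j => ⟨fun k => h ⟨(k:ℕ) + n*(j:ℕ), hlt j k⟩, fun k => hh _, rfl⟩, ?_⟩
    ext x
    simp only [Set.mem_iInter, Set.mem_preimage, ← Function.iterate_mul,
      ← Function.iterate_add_apply]
    constructor
    · intro hx j k
      exact hx ⟨(k:ℕ) + n*(j:ℕ), hlt j k⟩
    · intro hx i
      have h1 : f^[(i:ℕ)%n + n*((i:ℕ)/n)] x ∈
          h ⟨(i:ℕ)%n + n*((i:ℕ)/n), hlt ⟨_, hdiv i⟩ ⟨_, hmod i⟩⟩ :=
        hx ⟨(i:ℕ)/n, hdiv i⟩ ⟨(i:ℕ)%n, hmod i⟩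
      have e : (⟨(i:ℕ)%n + n*((i:ℕ)/n), hlt ⟨_, hdiv i⟩ ⟨_, hmod i⟩⟩ : Fin (n*m)) = i :=
        Fin.ext (Nat.mod_add_div (i:ℕ) n)
      rw [e] at h1
      rwa [Nat.mod_add_div (i:ℕ) n] at h1

lemma lebN_iterate (f : X → X) (U : Set (Set X)) {n : ℕ} (hn : 0 < n) (m : ℕ) :
    lebN (f^[n]) (covSeq f U n) m = lebN f U (n * m) := by
  rw [lebN, lebN, covSeq_iterate f U hn m]


/-! ### Putting things together, per cover -/

lemma fun_key (c : ℕ → ℝ) (n : ℕ) (hn : 0 < n) :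
    (fun m : ℕ => ((c (n*m) / (m:ℝ) : ℝ) : EReal))
      = fun m : ℕ => ((c (n*m) / ((n*m : ℕ):ℝ) : ℝ) : EReal) * (((n:ℝ)) : EReal) := by
  funext m
  rw [← EReal.coe_mul]
  congr 1
  rcases Nat.eq_zero_or_pos m with rfl | hm
  · simp
  · have hm' : ((m:ℝ)) ≠ 0 := by
      have : (0:ℝ) < (m:ℝ) := by exact_mod_cast hm
      linarith
    have hn' : ((n:ℝ)) ≠ 0 := by
      have : (0:ℝ) < (n:ℝ) := by exact_mod_cast hn
      linarith
    push_cast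
    field_simp

lemma limsup_subseq_eq (a : ℕ → ℝ) (n : ℕ) (hn : 0 < n)
    (hmono : ∀ j k, 1 ≤ j → j ≤ k → a j ≤ a k) :
    Filter.limsup (fun m : ℕ => ((a (n*m) / ((n*m : ℕ):ℝ) : ℝ) : EReal)) atTop
      = Filter.limsup (fun j : ℕ => ((a j / (j:ℝ) : ℝ) : EReal)) atTop :=
  le_antisymm (limsup_comp_mul_le (fun j : ℕ => ((a j / (j:ℝ) : ℝ) : EReal)) n hn)
    (limsup_le_limsup_subseq a n hn hmono)

lemma liminf_subseq_eq (a : ℕ → ℝ) (n : ℕ) (hn : 0 < n)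
    (hmono : ∀ j k, 1 ≤ j → j ≤ k → a j ≤ a k) :
    Filter.liminf (fun m : ℕ => ((a (n*m) / ((n*m : ℕ):ℝ) : ℝ) : EReal)) atTop
      = Filter.liminf (fun j : ℕ => ((a j / (j:ℝ) : ℝ) : EReal)) atTop :=
  le_antisymm (liminf_subseq_le a n hn hmono)
    (le_liminf_comp_mul (fun j : ℕ => ((a j / (j:ℝ) : ℝ) : EReal)) n hn)

lemma hLplus_covSeq [CompactSpace X] {f : X → X} (hf : Continuous f) {U : Set (Set X)}
    (hU : IsOpenCover U) (hUfin : U.Finite) {n : ℕ} (hn : 0 < n) :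
    hLplus (f^[n]) (covSeq f U n) = ((n:ℝ) : EReal) * hLplus f U := by
  have hnR : (0:ℝ) < (n:ℝ) := by exact_mod_cast hn
  have hkey : (fun m : ℕ =>
        ((-Real.log ((lebN (f^[n]) (covSeq f U n) m).toReal) / m : ℝ) : EReal))
      = fun m : ℕ => ((aF f U (n*m) / ((n*m : ℕ):ℝ) : ℝ) : EReal) * ((n:ℝ) : EReal) := by
    rw [← fun_key (aF f U) n hn]
    funext m
    rw [show lebN (f^[n]) (covSeq f U n) m = lebN f U (n*m) from lebN_iterate f U hn m]
    rfl
  show Filter.limsup _ atTop = _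
  rw [hkey, limsup_mul_coe _ hnR, limsup_subseq_eq (aF f U) n hn (aF_mono hf hU hUfin),
    EReal.mul_comm]
  rfl

lemma hLminus_covSeq [CompactSpace X] {f : X → X} (hf : Continuous f) {U : Set (Set X)}
    (hU : IsOpenCover U) (hUfin : U.Finite) {n : ℕ} (hn : 0 < n) :
    hLminus (f^[n]) (covSeq f U n) = ((n:ℝ) : EReal) * hLminus f U := by
  have hnR : (0:ℝ) < (n:ℝ) := by exact_mod_cast hn
  have hkey : (fun m : ℕ =>
        ((-Real.log ((lebN (f^[n]) (covSeq f U n) m).toReal) / m : ℝ) : EReal))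
      = fun m : ℕ => ((aF f U (n*m) / ((n*m : ℕ):ℝ) : ℝ) : EReal) * ((n:ℝ) : EReal) := by
    rw [← fun_key (aF f U) n hn]
    funext m
    rw [show lebN (f^[n]) (covSeq f U n) m = lebN f U (n*m) from lebN_iterate f U hn m]
    rfl
  show Filter.liminf _ atTop = _
  rw [hkey, liminf_mul_coe _ hnR, liminf_subseq_eq (aF f U) n hn (aF_mono hf hU hUfin),
    EReal.mul_comm]
  rfl

lemma hLplus_le_mul [CompactSpace X] {f : X → X} (hf : Continuous f) {V : Set (Set X)}
    (hV : IsOpenCover V) (hVfin : V.Finite) {n : ℕ} (hn : 0 < n) :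
    hLplus (f^[n]) V ≤ ((n:ℝ) : EReal) * hLplus f V := by
  have hnR : (0:ℝ) < (n:ℝ) := by exact_mod_cast hn
  have hev : ∀ᶠ m in atTop,
      ((-Real.log ((lebN (f^[n]) V m).toReal) / m : ℝ) : EReal)
        ≤ ((aF f V (n*m) / (m:ℝ) : ℝ) : EReal) := by
    filter_upwards [eventually_ge_atTop 1] with m hm
    have hmp : (0:ℝ) < (m:ℝ) := by exact_mod_cast hm
    exact EReal.coe_le_coe_iff.2 ((div_le_div_iff_of_pos_right hmp).2 (aF_le_subseq hf hV hn hm))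
  have h1 : hLplus (f^[n]) V
      ≤ Filter.limsup (fun m : ℕ => ((aF f V (n*m) / (m:ℝ) : ℝ) : EReal)) atTop :=
    limsup_le_limsup hev
  calc hLplus (f^[n]) V ≤ _ := h1
    _ = Filter.limsup (fun m : ℕ => ((aF f V (n*m) / ((n*m : ℕ):ℝ) : ℝ) : EReal)) atTop
          * ((n:ℝ) : EReal) := by
        rw [fun_key (aF f V) n hn, limsup_mul_coe _ hnR]
    _ = hLplus f V * ((n:ℝ) : EReal) := by
        rw [limsup_subseq_eq (aF f V) n hn (aF_mono hf hV hVfin)]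
        rfl
    _ = ((n:ℝ) : EReal) * hLplus f V := EReal.mul_comm _ _

lemma hLminus_le_mul [CompactSpace X] {f : X → X} (hf : Continuous f) {V : Set (Set X)}
    (hV : IsOpenCover V) (hVfin : V.Finite) {n : ℕ} (hn : 0 < n) :
    hLminus (f^[n]) V ≤ ((n:ℝ) : EReal) * hLminus f V := by
  have hnR : (0:ℝ) < (n:ℝ) := by exact_mod_cast hn
  have hev : ∀ᶠ m in atTop,
      ((-Real.log ((lebN (f^[n]) V m).toReal) / m : ℝ) : EReal)
        ≤ ((aF f V (n*m) / (m:ℝ) : ℝ) : EReal) := by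
    filter_upwards [eventually_ge_atTop 1] with m hm
    have hmp : (0:ℝ) < (m:ℝ) := by exact_mod_cast hm
    exact EReal.coe_le_coe_iff.2 ((div_le_div_iff_of_pos_right hmp).2 (aF_le_subseq hf hV hn hm))
  have h1 : hLminus (f^[n]) V
      ≤ Filter.liminf (fun m : ℕ => ((aF f V (n*m) / (m:ℝ) : ℝ) : EReal)) atTop :=
    liminf_le_liminf hev
  calc hLminus (f^[n]) V ≤ _ := h1
    _ = Filter.liminf (fun m : ℕ => ((aF f V (n*m) / ((n*m : ℕ):ℝ) : ℝ) : EReal)) atTop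
          * ((n:ℝ) : EReal) := by
        rw [fun_key (aF f V) n hn, liminf_mul_coe _ hnR]
    _ = hLminus f V * ((n:ℝ) : EReal) := by
        rw [liminf_subseq_eq (aF f V) n hn (aF_mono hf hV hVfin)]
        rfl
    _ = ((n:ℝ) : EReal) * hLminus f V := EReal.mul_comm _ _

lemma iSup_mul_coe {ι : Sort*} (u : ι → EReal) {c : ℝ} (hc : 0 < c) :
    (⨆ i, u i) * (c : EReal) = ⨆ i, u i * (c : EReal) :=
  (ERealMulRight c hc).map_iSup u


end AuxHL

/-- For every `n > 0`, `h_L^+(f^n) = n · h_L^+(f)` and `h_L^-(f^n) = n · h_L^-(f)`. -/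
theorem hL_iterate {X : Type*} [MetricSpace X] [CompactSpace X]
    (f : X → X) (hf : Continuous f) (n : ℕ) (hn : 0 < n) :
    hLplusSup (f^[n]) = (n : EReal) * hLplusSup f ∧
    hLminusSup (f^[n]) = (n : EReal) * hLminusSup f := by
  have hnR : (0:ℝ) < (n:ℝ) := by exact_mod_cast hn
  have hcast : ((n:ℝ) : EReal) = (n : EReal) := EReal.coe_coe_eq_natCast n
  constructor
  · apply le_antisymm
    · refine iSup_le fun V => iSup_le fun hV => ?_
      calc hLplus (f^[n]) V ≤ ((n:ℝ):EReal) * hLplus f V :=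
            hLplus_le_mul hf hV.1 hV.2 hn
        _ ≤ ((n:ℝ):EReal) * hLplusSup f := by
            refine mul_le_mul_of_nonneg_left ?_ (by exact_mod_cast hnR.le)
            exact le_iSup₂ (f := fun U (_ : IsOpenCover U ∧ U.Finite) => hLplus f U) V hV
        _ = (n:EReal) * hLplusSup f := by rw [hcast]
    · rw [← hcast, hLplusSup, iSup_subtype', EReal.mul_comm, iSup_mul_coe _ hnR]
      refine iSup_le fun s => ?_
      rw [EReal.mul_comm, ← hLplus_covSeq hf s.2.1 s.2.2 hn]
      exact le_iSup₂ (f := fun U (_ : IsOpenCover U ∧ U.Finite) => hLplus (f^[n]) U)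
        (covSeq f s.1 n) ⟨covSeq_isOpenCover hf s.2.1 n, covSeq_finite s.2.2 n⟩
  · apply le_antisymm
    · refine iSup_le fun V => iSup_le fun hV => ?_
      calc hLminus (f^[n]) V ≤ ((n:ℝ):EReal) * hLminus f V :=
            hLminus_le_mul hf hV.1 hV.2 hn
        _ ≤ ((n:ℝ):EReal) * hLminusSup f := by
            refine mul_le_mul_of_nonneg_left ?_ (by exact_mod_cast hnR.le)
            exact le_iSup₂ (f := fun U (_ : IsOpenCover U ∧ U.Finite) => hLminus f U) V hV
        _ = (n:EReal) * hLminusSup f := by rw [hcast]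
    · rw [← hcast, hLminusSup, iSup_subtype', EReal.mul_comm, iSup_mul_coe _ hnR]
      refine iSup_le fun s => ?_
      rw [EReal.mul_comm, ← hLminus_covSeq hf s.2.1 s.2.2 hn]
      exact le_iSup₂ (f := fun U (_ : IsOpenCover U ∧ U.Finite) => hLminus (f^[n]) U)
        (covSeq f s.1 n) ⟨covSeq_isOpenCover hf s.2.1 n, covSeq_finite s.2.2 n⟩
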